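/- The image of the set of p-ary bracketings with occurrence number n under the insertion-tuple map ST equals M(n,1,p), i.e., the set of weakly increasing n-tuples u of positive integers with u_i ≤ (p-1)(i-1)+1 for all i. -/

import Mathlib

/-- p-ary bracketings: terms over one variable `x` with one p-ary operation symbol `ω`. -/
inductive Brack (p : ℕ) : Type
  | x : Brack p
  | node : (Fin p → Brack p) → Brack p

namespace Brack

/-- occurrence number: number of occurrences of ω -/
def occ {p : ℕ} : Brack p → ℕ
  | .x => 0
  | .node f => 1 + ∑ i, occ (f i)

/-- length: number of occurrences of x -/
def len {p : ℕ} : Brack p → ℕ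
  | .x => 1
  | .node f => ∑ i, len (f i)

/-- evaluation of a bracketing in a groupoid, variables enumerated left-to-right
starting at position `j`. -/
def evalFrom {p : ℕ} {A : Type*} (op : (Fin p → A) → A) (v : ℕ → A) :
    Brack p → ℕ → A
  | .x, j => v j
  | .node f, j =>
      op (fun i => evalFrom op v (f i)
        (j + ∑ k ∈ Finset.univ.filter (· < i), len (f k)))

/-- the term function induced by a bracketing -/
def eval {p : ℕ} {A : Type*} (op : (Fin p → A) → A) (t : Brack p) (v : ℕ → A) : A :=
  evalFrom op v t 0

/-- prefix word of a bracketing: `true` codes ω, `false` codes x -/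
def word {p : ℕ} : Brack p → List Bool
  | .x => [false]
  | .node f => true :: (List.ofFn (fun i => word (f i))).flatten

/-- auxiliary: scan a word, recording 1 + number of x's before each ω -/
def STaux : List Bool → ℕ → List ℕ
  | [], _ => []
  | true :: w, c => (c + 1) :: STaux w c
  | false :: w, c => STaux w (c + 1)

/-- insertion tuple of a bracketing: the i-th entry is one plus the number
of x's preceding the i-th occurrence of ω in the prefix notation -/
def ST {p : ℕ} (t : Brack p) : List ℕ := STaux (word t) 0

/-- replace the i-th (0-based) occurrence of x in `t` by `s` -/
def replaceLeaf {p : ℕ} : Brack p → ℕ → Brack p → Brack p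
  | .x, i, s => if i = 0 then s else .x
  | .node f, i, s => .node (fun j =>
      let off := ∑ k ∈ Finset.univ.filter (· < j), len (f k)
      if off ≤ i ∧ i < off + len (f j) then replaceLeaf (f j) (i - off) s else f j)

/-- β_i : insertion of ω x … x at the i-th (1-based) occurrence of x -/
def beta {p : ℕ} (i : ℕ) (t : Brack p) : Brack p :=
  replaceLeaf t (i - 1) (.node (fun _ => .x))

/-- left depth: depth of leftmost leaf (binary case) -/
def dl : Brack 2 → ℕ
  | .x => 0
  | .node f => dl (f 0) + 1

/-- right depth: depth of rightmost leaf (binary case) -/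
def dr : Brack 2 → ℕ
  | .x => 0
  | .node f => dr (f 1) + 1

/-- left factor of a binary bracketing -/
def leftF : Brack 2 → Brack 2
  | .x => .x
  | .node f => f 0

/-- whether a bracketing is the single variable x -/
def isX {p : ℕ} : Brack p → Bool
  | .x => true
  | .node _ => false

/-- number of pairs of eggs, i.e. subterm occurrences of ω x x (binary case) -/
def eggs : Brack 2 → ℕ
  | .x => 0
  | .node f => (if isX (f 0) && isX (f 1) then 1 else 0) + eggs (f 0) + eggs (f 1)

end Brack

/-- generalized Catalan numbers -/
def genCat (p : ℕ) : ℕ → ℕ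
  | 0 => 1
  | n + 1 =>
      ∑ v ∈ (Finset.Nat.antidiagonalTuple p n).attach, ∏ k : Fin p, genCat p (v.1 k)
  decreasing_by
    have hv := Finset.Nat.mem_antidiagonalTuple.mp v.2
    have hle : v.1 k ≤ n := by
      calc v.1 k ≤ ∑ i, v.1 i :=
            Finset.single_le_sum (fun i _ => Nat.zero_le _) (Finset.mem_univ k)
        _ = n := hv
    omega

/-- the set M(n,k,p) of weakly increasing n-tuples of positive integers
with u_i ≤ (p-1)(i-1)+k (here indices are 0-based) -/
def Mset (n k p : ℕ) : Set (Fin n → ℕ) :=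
  {u | (∀ i : Fin n, 1 ≤ u i ∧ u i ≤ (p - 1) * (i : ℕ) + k) ∧
    ∀ i j : Fin n, i ≤ j → u i ≤ u j}


namespace STProof

open List

/-- a word is the prefix word of a (q+1)-ary term iff it is "good" -/
def GoodW (q : ℕ) (w : List Bool) : Prop :=
  w.count false = q * w.count true + 1 ∧
    ∀ v, v <+: w → v ≠ w → v.count false ≤ q * v.count true

lemma count_false_cons_true (l : List Bool) : (true :: l).count false = l.count false := by
  simp

lemma count_true_cons_true (l : List Bool) : (true :: l).count true = l.count true + 1 := by
  simp

lemma count_true_replicate (k : ℕ) : (List.replicate k false).count true = 0 := by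
  rw [count_eq_zero]
  intro h
  have := eq_of_mem_replicate h
  simp at this

lemma count_false_replicate (k : ℕ) : (List.replicate k false).count false = k := by
  have h : (List.replicate k false).count false = (List.replicate k false).length :=
    count_eq_length.mpr (fun b hb => (eq_of_mem_replicate hb).symm)
  simpa using h

lemma prefix_split {α : Type*} : ∀ {a : List α} {b v : List α}, v <+: a ++ b →
    v <+: a ∨ ∃ v', v = a ++ v' ∧ v' <+: b := by
  intro a
  induction a with
  | nil => exact fun h => Or.inr ⟨_, rfl, h⟩
  | cons x a ih =>
    intro b v h
    cases v with
    | nil => exact Or.inl (nil_prefix)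
    | cons y v =>
      rw [cons_append, cons_prefix_cons] at h
      obtain ⟨rfl, h2⟩ := h
      rcases ih h2 with h3 | ⟨v', hv', h3⟩
      · exact Or.inl (cons_prefix_cons.mpr ⟨rfl, h3⟩)
      · exact Or.inr ⟨v', by rw [hv', cons_append], h3⟩

lemma prefix_cases {α : Type*} {c : α} {w v : List α} (h : v <+: c :: w) :
    v = [] ∨ ∃ v', v = c :: v' ∧ v' <+: w := by
  cases v with
  | nil => exact Or.inl rfl
  | cons y v => rw [cons_prefix_cons] at h; exact Or.inr ⟨v, by rw [h.1], h.2⟩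

/-- cut off the shortest prefix with `j` more `false`s than `q` times `true`s -/
lemma cutEx (q : ℕ) : ∀ (w : List Bool) (j : ℕ), 1 ≤ j →
    q * w.count true + j ≤ w.count false →
    ∃ a b, w = a ++ b ∧ a.count false = q * a.count true + j ∧
      ∀ v, v <+: a → v ≠ a → v.count false + 1 ≤ q * v.count true + j := by
  intro w
  induction w with
  | nil => intro j h1 h2; simp at h2; omega
  | cons c w ih =>
    intro j h1 h2
    cases c with
    | false =>
      rcases j with _ | _ | k
      · omega
      · -- j = 1
        refine ⟨[false], w, rfl, by simp, ?_⟩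
        intro v hv hne
        have : v = [] := by
          rcases prefix_cases hv with rfl | ⟨v', rfl, hv'⟩
          · rfl
          · simp at hv'; simp [hv'] at hne
        simp [this]
      · -- j = k+2
        simp only [count_cons, if_pos, if_neg] at h2
        have h2' : q * w.count true + (k + 1) ≤ w.count false := by
          simp at h2 ⊢; omega
        obtain ⟨a, b, rfl, ha, hmin⟩ := ih (k + 1) (by omega) h2'
        refine ⟨false :: a, b, rfl, by simp [count_cons]; omega, ?_⟩
        intro v hv hne
        rcases prefix_cases hv with rfl | ⟨v', rfl, hv'⟩
        · simp
        · by_cases hva : v' = a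
          · subst hva; simp at hne
          · have := hmin v' hv' hva
            simp [count_cons]; omega
    | true =>
      have h2' : q * w.count true + (j - 1 + (q + 1)) ≤ w.count false := by
        simp only [count_cons, if_pos, if_neg] at h2
        simp at h2 ⊢
        have : q * (w.count true + 1) = q * w.count true + q := by ring
        omega
      obtain ⟨a, b, rfl, ha, hmin⟩ := ih (j - 1 + (q + 1)) (by omega) h2'
      refine ⟨true :: a, b, rfl, ?_, ?_⟩
      · simp [count_cons]
        have : q * (a.count true + 1) = q * a.count true + q := by ring
        omega
      · intro v hv hne
        rcases prefix_cases hv with rfl | ⟨v', rfl, hv'⟩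
        · simp; omega
        · by_cases hva : v' = a
          · subst hva; simp at hne
          · have := hmin v' hv' hva
            simp [count_cons]
            have : q * (v'.count true + 1) = q * v'.count true + q := by ring
            omega


lemma many (q : ℕ) : ∀ (m : ℕ) (w : List Bool),
    (∀ v, v <+: w → v ≠ w → v.count false + 1 ≤ q * v.count true + m) →
    w.count false = q * w.count true + m →
    ∃ ws : List (List Bool), ws.length = m ∧ ws.flatten = w ∧ ∀ u ∈ ws, GoodW q u := by
  intro m
  induction m with
  | zero =>
    intro w h1 h2
    have hw : w = [] := by
      by_contra hne
      have := h1 [] (nil_prefix) (fun h => hne h.symm)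
      simp at this
    exact ⟨[], rfl, by simp [hw], by simp⟩
  | succ m ih =>
    intro w h1 h2
    obtain ⟨a, b, rfl, ha, hmin⟩ := cutEx q w 1 le_rfl (by omega)
    have hga : GoodW q a := by
      refine ⟨ha, fun v hv hne => ?_⟩
      have := hmin v hv hne; omega
    have hcount : ∀ (c : Bool), (a ++ b).count c = a.count c + b.count c := by
      intro c; simp [count_append]
    have hb2 : b.count false = q * b.count true + m := by
      have h2' := h2
      rw [hcount, hcount] at h2'
      have : q * (a.count true + b.count true)
          = q * a.count true + q * b.count true := by ring
      omega
    have hb1 : ∀ v, v <+: b → v ≠ b → v.count false + 1 ≤ q * v.count true + m := by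
      intro v hv hne
      have hpre : (a ++ v) <+: (a ++ b) := by
        obtain ⟨r, rfl⟩ := hv
        exact ⟨r, by simp⟩
      have hne' : a ++ v ≠ a ++ b := fun h => hne (List.append_cancel_left h)
      have h1' := h1 (a ++ v) hpre hne'
      simp only [count_append] at h1'
      have hq : q * (a.count true + v.count true)
          = q * a.count true + q * v.count true := by ring
      omega
    obtain ⟨ws, hlen, hfl, hgood⟩ := ih b hb1 hb2
    refine ⟨a :: ws, by simp [hlen], by simp [hfl], ?_⟩
    intro u hu
    rcases mem_cons.mp hu with rfl | hu
    · exact hga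
    · exact hgood u hu

lemma exists_trees {P : ℕ} : ∀ (ws : List (List Bool)),
    (∀ u ∈ ws, ∃ t : Brack P, Brack.word t = u) →
    ∃ ts : List (Brack P), ts.map Brack.word = ws := by
  intro ws
  induction ws with
  | nil => exact fun _ => ⟨[], rfl⟩
  | cons u ws ih =>
    intro h
    obtain ⟨t, ht⟩ := h u (mem_cons_self)
    obtain ⟨ts, hts⟩ := ih (fun v hv => h v (mem_cons_of_mem _ hv))
    exact ⟨t :: ts, by simp [ht, hts]⟩

lemma ofFn_get_cast {α : Type*} (l : List α) (m : ℕ) (h : l.length = m) :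
    (List.ofFn fun i : Fin m => l.get (Fin.cast h.symm i)) = l := by
  subst h
  have := List.ofFn_getElem (xs := l)
  simpa [List.get] using this

lemma parse (q : ℕ) : ∀ (N : ℕ) (w : List Bool), w.length ≤ N → GoodW q w →
    ∃ t : Brack (q + 1), Brack.word t = w := by
  intro N
  induction N with
  | zero =>
    intro w hw hg
    have : w = [] := by simpa using length_eq_zero_iff.mp (Nat.le_zero.mp hw)
    subst this
    exact absurd hg.1 (by simp)
  | succ N ih =>
    intro w hw hg
    cases w with
    | nil => exact absurd hg.1 (by simp)
    | cons c w' =>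
      cases c with
      | false =>
        cases w' with
        | nil => exact ⟨Brack.x, rfl⟩
        | cons d w'' =>
          have := hg.2 [false] ⟨d :: w'', rfl⟩ (by simp)
          simp at this
      | true =>
        have h2 : w'.count false = q * w'.count true + (q + 1) := by
          have := hg.1
          simp only [count_cons, if_pos, if_neg] at this
          simp at this
          have hq : q * (w'.count true + 1) = q * w'.count true + q := by ring
          omega
        have h1 : ∀ v, v <+: w' → v ≠ w' →
            v.count false + 1 ≤ q * v.count true + (q + 1) := by
          intro v hv hne
          have hpre : (true :: v) <+: (true :: w') := cons_prefix_cons.mpr ⟨rfl, hv⟩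
          have hne' : (true :: v) ≠ (true :: w') := by simp [hne]
          have := hg.2 (true :: v) hpre hne'
          simp [count_cons] at this
          have hq : q * (v.count true + 1) = q * v.count true + q := by ring
          omega
        obtain ⟨ws, hlen, hfl, hgood⟩ := many q (q + 1) w' h1 h2
        have hpiece : ∀ u ∈ ws, ∃ t : Brack (q + 1), Brack.word t = u := by
          intro u hu
          apply ih u ?_ (hgood u hu)
          have hsub : u <+ ws.flatten := sublist_flatten_of_mem hu
          have := hsub.length_le
          rw [hfl] at this
          simpa using Nat.le_trans this (by simpa using hw)
        obtain ⟨ts, hts⟩ := exists_trees ws hpiece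
        have hts_len : ts.length = q + 1 := by
          have := congrArg List.length hts
          simpa [hlen] using this
        refine ⟨Brack.node (fun i => ts.get (Fin.cast hts_len.symm i)), ?_⟩
        show true :: (List.ofFn fun i => Brack.word (ts.get (Fin.cast hts_len.symm i))).flatten
            = true :: w'
        have hofn : (List.ofFn fun i => Brack.word (ts.get (Fin.cast hts_len.symm i)))
            = List.map Brack.word (List.ofFn fun i => ts.get (Fin.cast hts_len.symm i)) := by
          rw [List.map_ofFn]; rfl
        rw [hofn, ofFn_get_cast ts _ hts_len, hts, hfl]

lemma count_word_true {P : ℕ} (t : Brack P) : (Brack.word t).count true = Brack.occ t := by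
  induction t with
  | x => simp [Brack.word, Brack.occ]
  | node f ih =>
    show (true :: (List.ofFn fun i => Brack.word (f i)).flatten).count true = 1 + ∑ i, Brack.occ (f i)
    rw [count_cons]
    rw [List.count_flatten]
    simp only [List.map_ofFn]
    rw [List.sum_ofFn]
    simp only [Function.comp]
    simp [ih, add_comm]

lemma good_nonempty {q : ℕ} {u : List Bool} (h : GoodW q u) : u ≠ [] := by
  intro hu; subst hu; simpa using h.1

lemma cat_count (q : ℕ) : ∀ ws : List (List Bool), (∀ u ∈ ws, GoodW q u) →
    ws.flatten.count false = q * ws.flatten.count true + ws.length := by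
  intro ws
  induction ws with
  | nil => simp
  | cons w rest ih =>
    intro h
    have hw := (h w (mem_cons_self)).1
    have hr := ih (fun u hu => h u (mem_cons_of_mem _ hu))
    show (w ++ rest.flatten).count false = q * (w ++ rest.flatten).count true + (rest.length + 1)
    simp only [count_append]
    have : q * (w.count true + rest.flatten.count true)
        = q * w.count true + q * rest.flatten.count true := by ring
    omega

lemma cat_prefix (q : ℕ) : ∀ ws : List (List Bool), (∀ u ∈ ws, GoodW q u) →
    ∀ v, v <+: ws.flatten → v ≠ ws.flatten →
      v.count false + 1 ≤ q * v.count true + ws.length := by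
  intro ws
  induction ws with
  | nil =>
    intro _ v hv hne
    exact absurd (prefix_nil.mp (by simpa using hv)) (by simpa using hne)
  | cons w rest ih =>
    intro h v hv hne
    have hw := h w (mem_cons_self)
    have hflat : (w :: rest).flatten = w ++ rest.flatten := rfl
    rw [hflat] at hv hne
    rcases prefix_split hv with hv1 | ⟨v', rfl, hv2⟩
    · by_cases hvw : v = w
      · subst hvw
        have hrest : rest ≠ [] := by
          rintro rfl
          simp at hne
        have hrl : 1 ≤ rest.length := by
          cases rest with
          | nil => exact absurd rfl hrest
          | cons _ _ => simp
        have hw1 := hw.1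
        simp only [length_cons]
        omega
      · have := hw.2 v hv1 hvw
        simp only [length_cons]
        omega
    · have hne2 : v' ≠ rest.flatten := by
        intro hx; subst hx; exact hne rfl
      have := ih (fun u hu => h u (mem_cons_of_mem _ hu)) v' hv2 hne2
      simp only [count_append, length_cons]
      have hq : q * (w.count true + v'.count true)
          = q * w.count true + q * v'.count true := by ring
      have hw1 := hw.1
      omega

lemma good_word {q : ℕ} (t : Brack (q + 1)) : GoodW q (Brack.word t) := by
  induction t with
  | x =>
    refine ⟨by simp [Brack.word], ?_⟩
    intro v hv hne
    have hw : Brack.word (Brack.x : Brack (q + 1)) = [false] := rfl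
    rw [hw] at hv hne
    rcases prefix_cases hv with rfl | ⟨v', rfl, hv'⟩
    · simp
    · rw [prefix_nil] at hv'
      subst hv'
      exact absurd rfl hne
  | node f ih =>
    have hws : ∀ u ∈ (List.ofFn fun i => Brack.word (f i)), GoodW q u := by
      intro u hu
      obtain ⟨i, rfl⟩ := List.mem_ofFn.mp hu
      exact ih i
    have hlen : (List.ofFn fun i => Brack.word (f i)).length = q + 1 := by simp
    have hword : Brack.word (Brack.node f)
        = true :: (List.ofFn fun i => Brack.word (f i)).flatten := rfl
    constructor
    · rw [hword, count_false_cons_true, count_true_cons_true]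
      have := cat_count q _ hws
      rw [hlen] at this
      have hq : q * ((List.ofFn fun i => Brack.word (f i)).flatten.count true + 1)
          = q * (List.ofFn fun i => Brack.word (f i)).flatten.count true + q := by ring
      omega
    · rw [hword]
      intro v hv hne
      rcases prefix_cases hv with rfl | ⟨v', rfl, hv'⟩
      · simp
      · have hne' : v' ≠ (List.ofFn fun i => Brack.word (f i)).flatten := by
          intro hx; subst hx; exact hne rfl
        have := cat_prefix q _ hws v' hv' hne'
        rw [hlen] at this
        rw [count_false_cons_true, count_true_cons_true]
        have hq : q * (v'.count true + 1) = q * v'.count true + q := by ring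
        omega

lemma staux_length : ∀ (w : List Bool) (c : ℕ),
    (Brack.STaux w c).length = w.count true := by
  intro w
  induction w with
  | nil => intro c; simp [Brack.STaux]
  | cons b w ih =>
    intro c
    cases b with
    | false =>
      show (Brack.STaux w (c + 1)).length = _
      rw [ih]; simp [count_cons]
    | true =>
      show ((c + 1) :: Brack.STaux w c).length = _
      rw [length_cons, ih]; simp [count_cons]

lemma staux_lb : ∀ (w : List Bool) (c x : ℕ), x ∈ Brack.STaux w c → c + 1 ≤ x := by
  intro w
  induction w with
  | nil => intro c x h; simp [Brack.STaux] at h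
  | cons b w ih =>
    intro c x h
    cases b with
    | false =>
      have := ih (c + 1) x h
      omega
    | true =>
      rcases mem_cons.mp h with rfl | h
      · exact le_rfl
      · exact ih c x h

lemma staux_sorted : ∀ (w : List Bool) (c : ℕ), (Brack.STaux w c).Pairwise (· ≤ ·) := by
  intro w
  induction w with
  | nil => intro c; simp [Brack.STaux]
  | cons b w ih =>
    intro c
    cases b with
    | false => exact ih (c + 1)
    | true =>
      exact pairwise_cons.mpr ⟨fun x hx => staux_lb w c x hx, ih c⟩

lemma staux_ub (q : ℕ) : ∀ (w : List Bool) (c d : ℕ),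
    (∀ v, v <+: w → v ≠ w → c + v.count false ≤ q * (d + v.count true)) →
    ∀ (i : ℕ) (h : i < (Brack.STaux w c).length),
      (Brack.STaux w c).get ⟨i, h⟩ ≤ q * (d + i) + 1 := by
  intro w
  induction w with
  | nil => intro c d _ i h; simp [Brack.STaux] at h
  | cons b w ih =>
    intro c d hyp i h
    cases b with
    | false =>
      refine ih (c + 1) d ?_ i h
      intro v hv hne
      have hpre : (false :: v) <+: (false :: w) := cons_prefix_cons.mpr ⟨rfl, hv⟩
      have hne' : (false :: v) ≠ (false :: w) := by simp [hne]
      have := hyp _ hpre hne'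
      simp [count_cons] at this
      omega
    | true =>
      cases i with
      | zero =>
        show c + 1 ≤ q * (d + 0) + 1
        have := hyp [] nil_prefix (by simp)
        simpa using this
      | succ i =>
        show (Brack.STaux w c).get ⟨i, _⟩ ≤ q * (d + (i + 1)) + 1
        have hh : i < (Brack.STaux w c).length := by
          have : (Brack.STaux (true :: w) c).length = (Brack.STaux w c).length + 1 := rfl
          omega
        have := ih c (d + 1) ?_ i hh
        · rw [show d + (i + 1) = d + 1 + i by omega]
          exact this
        · intro v hv hne
          have hpre : (true :: v) <+: (true :: w) := cons_prefix_cons.mpr ⟨rfl, hv⟩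
          have hne' : (true :: v) ≠ (true :: w) := by simp [hne]
          have := hyp _ hpre hne'
          simp [count_cons] at this
          have hq : q * (d + (v.count true + 1)) = q * (d + 1 + v.count true) := by ring
          omega

/-- build the prefix word with insertion tuple `l` -/
def build (target : ℕ) : List ℕ → ℕ → List Bool
  | [], c => List.replicate (target - c) false
  | u :: l, c => List.replicate (u - 1 - c) false ++ true :: build target l (u - 1)

lemma build_count_true (target : ℕ) : ∀ (l : List ℕ) (c : ℕ),
    (build target l c).count true = l.length := by
  intro l
  induction l with
  | nil => intro c; simp [build, count_true_replicate]
  | cons u l ih =>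
    intro c
    show (List.replicate (u - 1 - c) false ++ true :: build target l (u - 1)).count true = _
    simp [count_append, count_cons, ih, count_true_replicate]

lemma build_count_false (target : ℕ) : ∀ (l : List ℕ) (c : ℕ), l.Pairwise (· ≤ ·) →
    (∀ x ∈ l, c + 1 ≤ x ∧ x ≤ target) → c ≤ target →
    (build target l c).count false = target - c := by
  intro l
  induction l with
  | nil => intro c _ _ _; simp [build]
  | cons u l ih =>
    intro c hs hb hct
    obtain ⟨hu1, hu2⟩ := hb u (mem_cons_self)
    have hs' := pairwise_cons.mp hs
    have ihv := ih (u - 1) hs'.2 ?_ (by omega)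
    · show (List.replicate (u - 1 - c) false ++ true :: build target l (u - 1)).count false = _
      simp only [count_append, count_cons]
      simp [ihv]
      omega
    · intro x hx
      have := hs'.1 x hx
      have := (hb x (mem_cons_of_mem _ hx)).2
      omega

lemma staux_replicate : ∀ (k : ℕ) (w : List Bool) (c : ℕ),
    Brack.STaux (List.replicate k false ++ w) c = Brack.STaux w (c + k) := by
  intro k
  induction k with
  | zero => intro w c; simp
  | succ k ih =>
    intro w c
    show Brack.STaux (false :: (List.replicate k false ++ w)) c = _
    show Brack.STaux (List.replicate k false ++ w) (c + 1) = _
    rw [ih]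
    congr 1
    omega

lemma build_staux (target : ℕ) : ∀ (l : List ℕ) (c : ℕ), l.Pairwise (· ≤ ·) →
    (∀ x ∈ l, c + 1 ≤ x) → Brack.STaux (build target l c) c = l := by
  intro l
  induction l with
  | nil =>
    intro c _ _
    show Brack.STaux (List.replicate (target - c) false) c = []
    rw [show List.replicate (target - c) false
        = List.replicate (target - c) false ++ [] by simp, staux_replicate]
    rfl
  | cons u l ih =>
    intro c hs hc
    have hu1 := hc u (mem_cons_self)
    have hs' := pairwise_cons.mp hs
    show Brack.STaux (List.replicate (u - 1 - c) false ++ true :: build target l (u - 1)) c = _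
    rw [staux_replicate]
    rw [show c + (u - 1 - c) = u - 1 by omega]
    show (u - 1 + 1) :: Brack.STaux (build target l (u - 1)) (u - 1) = u :: l
    rw [show u - 1 + 1 = u by omega]
    congr 1
    exact ih (u - 1) hs'.2 (fun x hx => by have := hs'.1 x hx; omega)

lemma prefix_replicate_counts {v : List Bool} {k : ℕ}
    (h : v <+: List.replicate k false) :
    v.count true = 0 ∧ v.count false = v.length ∧ v.length ≤ k := by
  have hmem : ∀ x ∈ v, x = false := fun x hx =>
    eq_of_mem_replicate (h.sublist.subset hx)
  refine ⟨?_, ?_, ?_⟩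
  · rw [count_eq_zero]
    intro hx
    exact absurd (hmem true hx) (by simp)
  · rw [count_eq_length]
    intro x hx
    exact (hmem x hx).symm
  · simpa using h.length_le

lemma build_prefix (q target : ℕ) : ∀ (l : List ℕ) (c d : ℕ), l.Pairwise (· ≤ ·) →
    (∀ x ∈ l, c + 1 ≤ x) →
    (∀ (i : ℕ) (h : i < l.length), l.get ⟨i, h⟩ ≤ q * (d + i) + 1) →
    c ≤ q * d → target ≤ q * (d + l.length) + 1 →
    ∀ v, v <+: build target l c → v ≠ build target l c →
      c + v.count false ≤ q * (d + v.count true) := by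
  intro l
  induction l with
  | nil =>
    intro c d _ _ _ hcd ht v hv hne
    obtain ⟨hT, hF, hL⟩ := prefix_replicate_counts hv
    have hlt : v.length < target - c := by
      rcases Nat.lt_or_ge v.length (target - c) with h | h
      · exact h
      · have hlen : v.length = (List.replicate (target - c) false).length := by
          simp; omega
        exact absurd (hv.eq_of_length hlen) hne
    rw [hT, hF]
    have h1 : q * (d + 0) = q * d := by ring
    simp only [length_nil, Nat.add_zero] at ht
    omega
  | cons u l ih =>
    intro c d hs hc hb hcd ht v hv hne
    have hu1 := hc u (mem_cons_self)
    have hu2 : u ≤ q * d + 1 := by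
      have h0 := hb 0 (by simp)
      simpa using h0
    have hs' := pairwise_cons.mp hs
    have hbuild : build target (u :: l) c
        = List.replicate (u - 1 - c) false ++ true :: build target l (u - 1) := rfl
    rw [hbuild] at hv hne
    have hcase1 : ∀ w₀ : List Bool, w₀ <+: List.replicate (u - 1 - c) false →
        c + w₀.count false ≤ q * (d + w₀.count true) := by
      intro w₀ hw₀
      obtain ⟨hT, hF, hL⟩ := prefix_replicate_counts hw₀
      rw [hT, hF]
      have h1 : q * (d + 0) = q * d := by ring
      omega
    rcases prefix_split hv with hv1 | ⟨v', rfl, hv2⟩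
    · exact hcase1 v hv1
    · rcases prefix_cases hv2 with rfl | ⟨v'', rfl, hv3⟩
      · rw [append_nil]
        exact hcase1 _ prefix_rfl
      · have hne3 : v'' ≠ build target l (u - 1) := by
          intro hx; subst hx; exact hne rfl
        have ihv := ih (u - 1) (d + 1) hs'.2
          (fun x hx => by have := hs'.1 x hx; omega)
          (fun i hi => by
            have hbi := hb (i + 1) (by simpa using Nat.succ_lt_succ hi)
            rw [show d + 1 + i = d + (i + 1) by omega]
            simpa using hbi)
          (by
            have h1 : q * (d + 1) = q * d + q := by ring
            omega)
          (by
            have he : d + 1 + l.length = d + (u :: l).length := by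
              simp only [length_cons]; omega
            rw [he]; exact ht)
          v'' hv3 hne3
        rw [count_append, count_append, count_true_replicate, count_false_replicate,
            count_false_cons_true, count_true_cons_true]
        have hq : q * (d + (0 + (v''.count true + 1)))
            = q * (d + 1 + v''.count true) := by ring
        omega

end STProof


theorem stmt_8 (p : ℕ) (hp : 2 ≤ p) (n : ℕ) :
    Brack.ST '' {t : Brack p | Brack.occ t = n} =
      {l : List ℕ | l.length = n ∧ l.Pairwise (· ≤ ·) ∧
        ∀ (i : ℕ) (h : i < l.length), 1 ≤ l.get ⟨i, h⟩ ∧ l.get ⟨i, h⟩ ≤ (p - 1) * i + 1} := by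
  obtain ⟨q, hq, rfl⟩ : ∃ q, 1 ≤ q ∧ p = q + 1 := ⟨p - 1, by omega, by omega⟩
  have hq1 : q + 1 - 1 = q := by omega
  ext l
  simp only [Set.mem_image, Set.mem_setOf_eq]
  constructor
  · rintro ⟨t, ht, rfl⟩
    have hg := STProof.good_word t
    simp only [Brack.ST]
    refine ⟨?_, ?_, ?_⟩
    · show (Brack.STaux (Brack.word t) 0).length = n
      rw [STProof.staux_length, STProof.count_word_true, ht]
    · exact STProof.staux_sorted _ _
    · intro i h
      constructor
      · have := STProof.staux_lb (Brack.word t) 0 _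
          ((Brack.STaux (Brack.word t) 0).get_mem ⟨i, h⟩)
        omega
      · have hub := STProof.staux_ub q (Brack.word t) 0 0 ?_ i h
        · rw [hq1]
          calc (Brack.STaux (Brack.word t) 0).get ⟨i, h⟩ ≤ q * (0 + i) + 1 := hub
            _ = q * i + 1 := by ring_nf
        · intro v hv hne
          have := hg.2 v hv hne
          have h0 : q * (0 + v.count true) = q * v.count true := by ring
          omega
  · rintro ⟨hlen, hsort, hbound⟩
    rw [hq1] at hbound
    set target := q * n + 1 with htarget
    have hget1 : ∀ x ∈ l, 0 + 1 ≤ x := by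
      intro x hx
      obtain ⟨i, rfl⟩ := List.mem_iff_get.mp hx
      have h1 := (hbound i i.isLt).1
      simp only [Fin.eta] at h1
      omega
    have hgetb : ∀ x ∈ l, 0 + 1 ≤ x ∧ x ≤ target := by
      intro x hx
      refine ⟨hget1 x hx, ?_⟩
      obtain ⟨i, rfl⟩ := List.mem_iff_get.mp hx
      have h2 := (hbound i i.isLt).2
      simp only [Fin.eta] at h2
      have h3 : q * (i : ℕ) ≤ q * n := Nat.mul_le_mul_left _ (by
        have := i.isLt; omega)
      omega
    have hF := STProof.build_count_false target l 0 hsort hgetb (by omega)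
    have hT := STProof.build_count_true target l 0
    have hGood : STProof.GoodW q (STProof.build target l 0) := by
      constructor
      · rw [hF, hT, hlen]
        omega
      · intro v hv hne
        have := STProof.build_prefix q target l 0 0 hsort hget1
          (fun i hi => by
            have := (hbound i hi).2
            have h0 : q * (0 + i) = q * i := by ring
            omega)
          (by simp)
          (by
            have h0 : q * (0 + n) = q * n := by ring
            rw [hlen, h0])
          v hv hne
        have h0 : q * (0 + v.count true) = q * v.count true := by ring
        omega
    obtain ⟨t, hw⟩ := STProof.parse q (STProof.build target l 0).length _ le_rfl hGood
    refine ⟨t, ?_, ?_⟩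
    · show Brack.occ t = n
      rw [← STProof.count_word_true t, hw, hT, hlen]
    · show Brack.STaux (Brack.word t) 0 = l
      rw [hw]
      exact STProof.build_staux target l 0 hsort hget1
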